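/- Let h : [0,1) → [0,1) be a measurable bijection for which there exist a measurable partition {A_k}_{k∈ℤ} of [1/2,1) and a measurable partition {B_k}_{k∈ℤ} of [0,1/2) such that h(x) = frac(2^k x) for x ∈ A_k and h(x) = frac(2^k(x−1)) for x ∈ B_k. Then there exists a regularized wavelet set W such that h = h̃_W. -/

import Mathlib

open MeasureTheory Set Real Filter
open scoped symmDiff Classical

noncomputable section

/-- The Littlewood–Paley set `E = [-2π,-π) ∪ [π,2π)`. -/
def E : Set ℝ := Ico (-(2*π)) (-π) ∪ Ico π (2*π)

/-- `tau x = x + 2jπ`, where `j` is the unique integer with `x + 2jπ ∈ E`. -/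
def tau (x : ℝ) : ℝ :=
  if x - 2*π*(⌊x/(2*π)⌋ : ℝ) < π then x - 2*π*(⌊x/(2*π)⌋ : ℝ) - 2*π
  else x - 2*π*(⌊x/(2*π)⌋ : ℝ)

/-- `delta x = 2^k x`, where (for `x ≠ 0`) `k` is the unique integer with `2^k x ∈ E`. -/
def delta (x : ℝ) : ℝ :=
  if 0 < x then (2:ℝ)^(⌈Real.logb 2 (π/x)⌉) * x
  else (2:ℝ)^(⌊Real.logb 2 (2*π/(-x))⌋) * x

/-- The map `ξ : E → [0,1)`. -/
def xiMap (x : ℝ) : ℝ := if x < 0 then x/(2*π) + 1 else x/(2*π)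

/-- The inverse `ξ⁻¹ : [0,1) → E`. -/
def xiInv (y : ℝ) : ℝ := if y < 1/2 then 2*π*(y-1) else 2*π*y

/-- The translates `{W + 2kπ}_{k ∈ ℤ}` form a partition of `ℝ`. -/
def TransPartition (W : Set ℝ) : Prop :=
  (⋃ k : ℤ, (fun x : ℝ => x + 2*π*(k:ℝ)) '' W) = univ ∧
  Pairwise fun k l : ℤ =>
    Disjoint ((fun x : ℝ => x + 2*π*(k:ℝ)) '' W) ((fun x : ℝ => x + 2*π*(l:ℝ)) '' W)

/-- The dilates `{2^k W}_{k ∈ ℤ}` form a partition of `ℝ \ {0}`. -/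
def DilPartition (W : Set ℝ) : Prop :=
  (⋃ k : ℤ, (fun x : ℝ => (2:ℝ)^k * x) '' W) = {(0:ℝ)}ᶜ ∧
  Pairwise fun k l : ℤ =>
    Disjoint ((fun x : ℝ => (2:ℝ)^k * x) '' W) ((fun x : ℝ => (2:ℝ)^l * x) '' W)

/-- A regularized wavelet set. -/
def IsRegularizedWaveletSet (W : Set ℝ) : Prop :=
  MeasurableSet W ∧ TransPartition W ∧ DilPartition W

/-- The wavelet induced isomorphism `h̃_W = ξ ∘ τ|_W ∘ (δ|_W)⁻¹ ∘ ξ⁻¹` of `[0,1)`. -/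
def hIso (W : Set ℝ) : ℝ → ℝ :=
  fun t => xiMap (tau (Function.invFunOn delta W (xiInv t)))

/-- The class of wavelet induced maps of `[0,1)` (Proposition 2.3 (i)-(ii)). -/
def IsWaveletInduced (h : ℝ → ℝ) : Prop :=
  Set.BijOn h (Ico (0:ℝ) 1) (Ico (0:ℝ) 1) ∧
  Measurable ((Ico (0:ℝ) 1).restrict h) ∧
  ∃ A B : ℤ → Set ℝ,
    (∀ k, MeasurableSet (A k)) ∧ (∀ k, MeasurableSet (B k)) ∧
    (⋃ k, A k) = Ico (1/2 : ℝ) 1 ∧ Pairwise (Function.onFun Disjoint A) ∧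
    (⋃ k, B k) = Ico (0:ℝ) (1/2) ∧ Pairwise (Function.onFun Disjoint B) ∧
    (∀ k, ∀ x ∈ A k, h x = Int.fract ((2:ℝ)^k * x)) ∧
    (∀ k, ∀ x ∈ B k, h x = Int.fract ((2:ℝ)^k * (x - 1)))

/-- The class `WI₁`. -/
def MemWI1 (f : ℝ → ℝ) : Prop :=
  ∃ A B : ℕ → Set ℝ,
    (∀ k, MeasurableSet (A k)) ∧ (∀ k, MeasurableSet (B k)) ∧
    (⋃ k, A k) = Ico (1/2 : ℝ) 1 ∧ Pairwise (Function.onFun Disjoint A) ∧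
    (⋃ k, B k) = Ico (0:ℝ) (1/2) ∧ Pairwise (Function.onFun Disjoint B) ∧
    (∀ k, ∀ x ∈ A k, f x = x / 2^(k+1)) ∧
    (∀ k, ∀ x ∈ B k, f x = (x - 1) / 2^(k+1) + 1)

/-- The class `WI₂`. -/
def MemWI2 (g : ℝ → ℝ) : Prop :=
  Measurable ((Ico (0:ℝ) 1).restrict g) ∧
  Set.MapsTo g (Ico (0:ℝ) 1) (Ico (0:ℝ) 1) ∧
  Set.InjOn g (Ico (0:ℝ) 1) ∧
  ∀ x ∈ Ico (0:ℝ) 1, ∃ k l : ℕ, g x = (x + l) / 2^k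

/-- The Schröder–Cantor–Bernstein map `u ⋄ v` for injections between arbitrary types. -/
def scb {α β : Type*} (u : α → β) (v : β → α) : α → β :=
  fun x =>
    if x ∈ ⋃ k : ℕ, (v ∘ u)^[k] '' (Set.range v)ᶜ then u x
    else if h2 : x ∈ Set.range v then Classical.choose h2
    else u x

/-- The Schröder–Cantor–Bernstein map `u ⋄ v` for maps of `[0,1)`. -/
def scbOn (u v : ℝ → ℝ) : ℝ → ℝ :=
  fun x =>
    if x ∈ ⋃ k : ℕ, (v ∘ u)^[k] '' (Ico (0:ℝ) 1 \ v '' (Ico (0:ℝ) 1)) then u x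
    else Function.invFunOn v (Ico (0:ℝ) 1) x

/-- The metric `d` on wavelet sets. -/
def dws (W₁ W₂ : Set ℝ) : ℝ :=
  Real.sqrt (volume (W₁ ∆ W₂)).toReal + Real.sqrt (∫ x in W₁ ∆ W₂, |x|⁻¹)

/-- The measure `ν` on `[0,1)` with density `(1-x)⁻¹` on `[0,1/2)` and `x⁻¹` on `[1/2,1)`. -/
def nuMeasure : Measure ℝ :=
  volume.withDensity (fun x =>
    ENNReal.ofReal (if x ∈ Ico (0:ℝ) (1/2) then (1-x)⁻¹
      else if x ∈ Ico (1/2:ℝ) 1 then x⁻¹ else 0))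


lemma twoPiPos : (0:ℝ) < 2*π := by positivity

lemma rpow_intc (j : ℤ) : (2:ℝ) ^ (j:ℝ) = (2:ℝ) ^ j := Real.rpow_intCast 2 j

lemma kceil_eq {x : ℝ} (hx : 0 < x) (j : ℤ) (h1 : π ≤ (2:ℝ)^j * x)
    (h2 : (2:ℝ)^j * x < 2*π) : ⌈Real.logb 2 (π/x)⌉ = j := by
  have hπx : 0 < π / x := div_pos pi_pos hx
  rw [Int.ceil_eq_iff]
  constructor
  · have : ((j:ℝ) - 1) = ((j - 1 : ℤ) : ℝ) := by push_cast; ring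
    rw [this, lt_logb_iff_rpow_lt one_lt_two hπx, rpow_intc]
    rw [lt_div_iff₀ hx, zpow_sub₀ (two_ne_zero)]
    rw [zpow_one]
    nlinarith [zpow_pos (show (0:ℝ) < 2 by norm_num) j]
  · rw [logb_le_iff_le_rpow one_lt_two hπx, rpow_intc, div_le_iff₀ hx]
    exact h1

lemma kfloor_eq {x : ℝ} (hx : x < 0) (j : ℤ) (h1 : -(2*π) ≤ (2:ℝ)^j * x)
    (h2 : (2:ℝ)^j * x < -π) : ⌊Real.logb 2 (2*π/(-x))⌋ = j := by
  have hnx : 0 < -x := neg_pos.2 hx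
  have hq : 0 < 2*π/(-x) := div_pos twoPiPos hnx
  rw [Int.floor_eq_iff]
  constructor
  · rw [le_logb_iff_rpow_le one_lt_two hq, rpow_intc, le_div_iff₀ hnx]
    nlinarith
  · have : ((j:ℝ) + 1) = ((j + 1 : ℤ) : ℝ) := by push_cast; ring
    rw [this, logb_lt_iff_lt_rpow one_lt_two hq, rpow_intc, div_lt_iff₀ hnx,
      zpow_add₀ (two_ne_zero), zpow_one]
    nlinarith

lemma delta_eq_of {x : ℝ} (j : ℤ) (h : (2:ℝ)^j * x ∈ E) : delta x = (2:ℝ)^j * x := by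
  have h2j : (0:ℝ) < (2:ℝ)^j := zpow_pos (by norm_num) j
  rcases h with h | h
  · obtain ⟨h1, h2⟩ := h
    have hx : x < 0 := by nlinarith [pi_pos]
    rw [delta, if_neg (by linarith), kfloor_eq hx j h1 h2]
  · obtain ⟨h1, h2⟩ := h
    have hx : 0 < x := by nlinarith [pi_pos]
    rw [delta, if_pos hx, kceil_eq hx j h1 h2]

lemma delta_mem_E {x : ℝ} (hx : x ≠ 0) : delta x ∈ E := by
  rcases hx.lt_or_gt with hx | hx
  · have hnx : 0 < -x := neg_pos.2 hx
    have hq : 0 < 2*π/(-x) := div_pos twoPiPos hnx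
    set j := ⌊Real.logb 2 (2*π/(-x))⌋ with hj
    have h1 : (2:ℝ)^j ≤ 2*π/(-x) := by
      rw [← rpow_intc, ← le_logb_iff_rpow_le one_lt_two hq]; exact Int.floor_le _
    have h2 : 2*π/(-x) < (2:ℝ)^j * 2 := by
      have h' : Real.logb 2 (2*π/(-x)) < ((j+1:ℤ):ℝ) := by
        push_cast; rw [hj]; exact Int.lt_floor_add_one _
      rw [logb_lt_iff_lt_rpow one_lt_two hq, rpow_intc, zpow_add₀ two_ne_zero, zpow_one] at h'
      exact h'
    rw [delta, if_neg (by linarith), ← hj]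
    left
    constructor
    · rw [le_div_iff₀ hnx] at h1; nlinarith
    · rw [div_lt_iff₀ hnx] at h2; nlinarith
  · have hq : 0 < π/x := div_pos pi_pos hx
    set j := ⌈Real.logb 2 (π/x)⌉ with hj
    have h1 : π/x ≤ (2:ℝ)^j := by
      rw [← rpow_intc, ← logb_le_iff_le_rpow one_lt_two hq]; exact Int.le_ceil _
    have h2 : (2:ℝ)^j < (π/x) * 2 := by
      have h' : ((j-1:ℤ):ℝ) < Real.logb 2 (π/x) := by
        push_cast; rw [hj]; linarith [Int.ceil_lt_add_one (Real.logb 2 (π/x))]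
      rw [lt_logb_iff_rpow_lt one_lt_two hq, rpow_intc, zpow_sub₀ two_ne_zero, zpow_one,
        div_lt_iff₀ (show (0:ℝ) < 2 by norm_num)] at h'
      linarith
    rw [delta, if_pos hx, ← hj]
    right
    constructor
    · rw [div_le_iff₀ hx] at h1; nlinarith
    · rw [div_mul_eq_mul_div, lt_div_iff₀ hx] at h2
      nlinarith

def kE (x : ℝ) : ℤ :=
  if 0 < x then ⌈Real.logb 2 (π/x)⌉ else ⌊Real.logb 2 (2*π/(-x))⌋

lemma delta_def (x : ℝ) : delta x = (2:ℝ)^(kE x) * x := by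
  unfold delta kE; split_ifs <;> rfl

lemma delta_zpow {x : ℝ} (hx : x ≠ 0) (m : ℤ) : delta ((2:ℝ)^m * x) = delta x := by
  have h : (2:ℝ)^(kE x - m) * ((2:ℝ)^m * x) = delta x := by
    rw [delta_def, zpow_sub₀ two_ne_zero]
    field_simp
  rw [delta_eq_of (kE x - m) (by rw [h]; exact delta_mem_E hx), h]

lemma tau_eq (x : ℝ) : tau x = xiInv (Int.fract (x/(2*π))) := by
  have hp := twoPiPos
  have key : x - 2*π*(⌊x/(2*π)⌋:ℝ) = 2*π*Int.fract (x/(2*π)) := by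
    rw [Int.fract]; field_simp
  unfold tau xiInv
  rw [key]
  by_cases h : Int.fract (x/(2*π)) < 1/2
  · rw [if_pos (by nlinarith), if_pos h]; ring
  · rw [if_neg (by push_neg at h ⊢; nlinarith), if_neg h]

lemma tau_add_int (x : ℝ) : ∃ m : ℤ, x = tau x + 2*π*(m:ℝ) := by
  unfold tau; split_ifs
  · exact ⟨⌊x/(2*π)⌋ + 1, by push_cast; ring⟩
  · exact ⟨⌊x/(2*π)⌋, by push_cast; ring⟩

lemma tau_periodic (x : ℝ) (m : ℤ) : tau (x + 2*π*(m:ℝ)) = tau x := by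
  rw [tau_eq, tau_eq]
  congr 1
  have h : (x + 2*π*(m:ℝ))/(2*π) = x/(2*π) + m := by field_simp
  rw [h, Int.fract_add_intCast]

lemma xiInv_mem_E {s : ℝ} (hs : s ∈ Ico (0:ℝ) 1) : xiInv s ∈ E := by
  obtain ⟨h0, h1⟩ := hs
  have hp := pi_pos
  unfold xiInv E; split_ifs with h
  · left; constructor
    · nlinarith
    · nlinarith
  · right; push_neg at h; constructor
    · nlinarith
    · nlinarith

lemma tau_mem_E (x : ℝ) : tau x ∈ E := by
  rw [tau_eq]; exact xiInv_mem_E ⟨Int.fract_nonneg _, Int.fract_lt_one _⟩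

lemma xiMap_xiInv {s : ℝ} (hs : s ∈ Ico (0:ℝ) 1) : xiMap (xiInv s) = s := by
  obtain ⟨h0, h1⟩ := hs
  have hp := pi_pos
  by_cases h : s < 1/2
  · rw [xiInv, if_pos h, xiMap, if_pos (by nlinarith)]
    field_simp; ring
  · push_neg at h
    rw [xiInv, if_neg (not_lt.2 h), xiMap, if_neg (by push_neg; nlinarith)]
    field_simp

lemma xiInv_inj {s1 s2 : ℝ} (h1 : s1 ∈ Ico (0:ℝ) 1) (h2 : s2 ∈ Ico (0:ℝ) 1)
    (h : xiInv s1 = xiInv s2) : s1 = s2 := by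
  rw [← xiMap_xiInv h1, ← xiMap_xiInv h2, h]

lemma xiMap_mem {x : ℝ} (hx : x ∈ E) : xiMap x ∈ Ico (0:ℝ) 1 ∧ xiInv (xiMap x) = x := by
  have hp := pi_pos
  rcases hx with ⟨h1, h2⟩ | ⟨h1, h2⟩
  · have hx0 : x < 0 := by linarith
    have hd1 : (-1:ℝ) ≤ x/(2*π) := by rw [le_div_iff₀ twoPiPos]; linarith
    have hd2 : x/(2*π) < -(1/2) := by rw [div_lt_iff₀ twoPiPos]; linarith
    rw [xiMap, if_pos hx0]
    refine ⟨⟨by linarith, by linarith⟩, ?_⟩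
    rw [xiInv, if_pos (by linarith)]
    field_simp; ring
  · have hd1 : (1/2:ℝ) ≤ x/(2*π) := by rw [le_div_iff₀ twoPiPos]; linarith
    have hd2 : x/(2*π) < 1 := by rw [div_lt_iff₀ twoPiPos]; linarith
    rw [xiMap, if_neg (by push_neg; linarith)]
    refine ⟨⟨by linarith, hd2⟩, ?_⟩
    rw [xiInv, if_neg (by linarith)]
    field_simp

/-- Every map `h` with the properties (i)-(ii) of Proposition 2.3 is of the form
`h̃_W` for some regularized wavelet set `W`. -/
theorem exists_regularized_of_isWaveletInduced (h : ℝ → ℝ) (hh : IsWaveletInduced h) :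
    ∃ W : Set ℝ, IsRegularizedWaveletSet W ∧ Set.EqOn h (hIso W) (Ico (0:ℝ) 1) := by
  obtain ⟨hbij, hmeas, A, B, hAm, hBm, hAU, hAd, hBU, hBd, hA, hB⟩ := hh
  set W : Set ℝ := ⋃ k : ℤ,
    ((fun t => (2:ℝ)^k * (2*π) * t) '' A k ∪ (fun t => (2:ℝ)^k * (2*π) * (t-1)) '' B k)
    with hWdef
  have hp := pi_pos
  have hAsub : ∀ k, A k ⊆ Ico (1/2:ℝ) 1 := fun k => hAU ▸ subset_iUnion A k
  have hBsub : ∀ k, B k ⊆ Ico (0:ℝ) (1/2) := fun k => hBU ▸ subset_iUnion B k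
  -- branch predicate
  have hWmem : ∀ w ∈ W, ∃ (k:ℤ) (t:ℝ),
      ((t ∈ A k ∧ w = (2:ℝ)^k * (2*π) * t) ∨ (t ∈ B k ∧ w = (2:ℝ)^k * (2*π) * (t-1))) := by
    intro w hw
    rw [hWdef] at hw
    simp only [mem_iUnion, mem_union, mem_image] at hw
    obtain ⟨k, ⟨t, ht, rfl⟩ | ⟨t, ht, rfl⟩⟩ := hw
    · exact ⟨k, t, Or.inl ⟨ht, rfl⟩⟩
    · exact ⟨k, t, Or.inr ⟨ht, rfl⟩⟩
  have hkey : ∀ (k:ℤ) (t w : ℝ),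
      ((t ∈ A k ∧ w = (2:ℝ)^k * (2*π) * t) ∨ (t ∈ B k ∧ w = (2:ℝ)^k * (2*π) * (t-1))) →
      t ∈ Ico (0:ℝ) 1 ∧ delta w = xiInv t ∧ tau w = xiInv (h t) ∧ w ≠ 0 := by
    intro k t w hw
    have h2k : (0:ℝ) < (2:ℝ)^k := zpow_pos (by norm_num) k
    rcases hw with ⟨ht, rfl⟩ | ⟨ht, rfl⟩
    · obtain ⟨ht1, ht2⟩ := hAsub k ht
      have ht0 : t ∈ Ico (0:ℝ) 1 := ⟨by linarith, ht2⟩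
      have hxi : xiInv t = 2*π*t := by rw [xiInv, if_neg (by simp only [not_lt]; linarith)]
      have hc : (2:ℝ)^(-k) * ((2:ℝ)^k * (2*π) * t) = 2*π*t := by
        rw [zpow_neg]; field_simp
      have hE : 2*π*t ∈ E := hxi ▸ xiInv_mem_E ht0
      refine ⟨ht0, ?_, ?_, ?_⟩
      · rw [delta_eq_of (-k) (by rw [hc]; exact hE), hc, hxi]
      · have harg : ((2:ℝ)^k * (2*π) * t) / (2*π) = (2:ℝ)^k * t := by field_simp
        rw [tau_eq, harg, hA k t ht]
      · exact (mul_pos (mul_pos h2k twoPiPos) (by linarith)).ne'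
    · obtain ⟨ht1, ht2⟩ := hBsub k ht
      have ht0 : t ∈ Ico (0:ℝ) 1 := ⟨ht1, by linarith⟩
      have hxi : xiInv t = 2*π*(t-1) := by rw [xiInv, if_pos ht2]
      have hc : (2:ℝ)^(-k) * ((2:ℝ)^k * (2*π) * (t-1)) = 2*π*(t-1) := by
        rw [zpow_neg]; field_simp
      have hE : 2*π*(t-1) ∈ E := hxi ▸ xiInv_mem_E ht0
      refine ⟨ht0, ?_, ?_, ?_⟩
      · rw [delta_eq_of (-k) (by rw [hc]; exact hE), hc, hxi]
      · have harg : ((2:ℝ)^k * (2*π) * (t-1)) / (2*π) = (2:ℝ)^k * (t-1) := by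
          field_simp
        rw [tau_eq, harg, hB k t ht]
      · exact (mul_neg_of_pos_of_neg (mul_pos h2k twoPiPos) (by linarith)).ne
  have hdet : ∀ (k1 k2 : ℤ) (t w1 w2 : ℝ),
      ((t ∈ A k1 ∧ w1 = (2:ℝ)^k1 * (2*π) * t) ∨ (t ∈ B k1 ∧ w1 = (2:ℝ)^k1 * (2*π) * (t-1))) →
      ((t ∈ A k2 ∧ w2 = (2:ℝ)^k2 * (2*π) * t) ∨ (t ∈ B k2 ∧ w2 = (2:ℝ)^k2 * (2*π) * (t-1))) →
      w1 = w2 := by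
    intro k1 k2 t w1 w2 h1 h2
    rcases h1 with ⟨ht1, rfl⟩ | ⟨ht1, rfl⟩ <;> rcases h2 with ⟨ht2, rfl⟩ | ⟨ht2, rfl⟩
    · have : k1 = k2 := by
        by_contra hne
        exact Set.disjoint_left.1 (hAd hne) ht1 ht2
      rw [this]
    · exfalso
      obtain ⟨a, -⟩ := hAsub k1 ht1
      obtain ⟨-, b⟩ := hBsub k2 ht2
      linarith
    · exfalso
      obtain ⟨a, -⟩ := hAsub k2 ht2
      obtain ⟨-, b⟩ := hBsub k1 ht1
      linarith
    · have : k1 = k2 := by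
        by_contra hne
        exact Set.disjoint_left.1 (hBd hne) ht1 ht2
      rw [this]
  -- injectivity of delta on W
  have hdinj : ∀ w1 ∈ W, ∀ w2 ∈ W, delta w1 = delta w2 → w1 = w2 := by
    intro w1 hw1 w2 hw2 he
    obtain ⟨k1, t1, hb1⟩ := hWmem w1 hw1
    obtain ⟨k2, t2, hb2⟩ := hWmem w2 hw2
    obtain ⟨hI1, hd1, -, -⟩ := hkey _ _ _ hb1
    obtain ⟨hI2, hd2, -, -⟩ := hkey _ _ _ hb2
    have ht12 : t1 = t2 := xiInv_inj hI1 hI2 (by rw [← hd1, ← hd2, he])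
    subst ht12
    exact hdet _ _ _ _ _ hb1 hb2
  -- injectivity of tau on W
  have htinj : ∀ w1 ∈ W, ∀ w2 ∈ W, tau w1 = tau w2 → w1 = w2 := by
    intro w1 hw1 w2 hw2 he
    obtain ⟨k1, t1, hb1⟩ := hWmem w1 hw1
    obtain ⟨k2, t2, hb2⟩ := hWmem w2 hw2
    obtain ⟨hI1, -, hd1, -⟩ := hkey _ _ _ hb1
    obtain ⟨hI2, -, hd2, -⟩ := hkey _ _ _ hb2
    have hht : h t1 = h t2 :=
      xiInv_inj (hbij.mapsTo hI1) (hbij.mapsTo hI2) (by rw [← hd1, ← hd2, he])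
    have ht12 : t1 = t2 := hbij.injOn hI1 hI2 hht
    subst ht12
    exact hdet _ _ _ _ _ hb1 hb2
  -- construction
  have hconstr : ∀ t ∈ Ico (0:ℝ) 1, ∃ w ∈ W, delta w = xiInv t ∧ tau w = xiInv (h t) := by
    intro t ht
    by_cases h2 : t < 1/2
    · have : t ∈ ⋃ k, B k := by rw [hBU]; exact ⟨ht.1, h2⟩
      obtain ⟨k, hk⟩ := mem_iUnion.1 this
      refine ⟨(2:ℝ)^k * (2*π) * (t-1), ?_, ?_⟩
      · rw [hWdef]
        exact mem_iUnion.2 ⟨k, Set.mem_union_right _ ⟨t, hk, rfl⟩⟩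
      · obtain ⟨-, hd, htau, -⟩ := hkey k t _ (Or.inr ⟨hk, rfl⟩)
        exact ⟨hd, htau⟩
    · have : t ∈ ⋃ k, A k := by rw [hAU]; exact ⟨le_of_not_gt h2, ht.2⟩
      obtain ⟨k, hk⟩ := mem_iUnion.1 this
      refine ⟨(2:ℝ)^k * (2*π) * t, ?_, ?_⟩
      · rw [hWdef]
        exact mem_iUnion.2 ⟨k, Set.mem_union_left _ ⟨t, hk, rfl⟩⟩
      · obtain ⟨-, hd, htau, -⟩ := hkey k t _ (Or.inl ⟨hk, rfl⟩)
        exact ⟨hd, htau⟩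
  have hdsurj : ∀ x ∈ E, ∃ w ∈ W, delta w = x := by
    intro x hx
    obtain ⟨htI, hxi⟩ := xiMap_mem hx
    obtain ⟨w, hw, hd, -⟩ := hconstr _ htI
    exact ⟨w, hw, by rw [hd, hxi]⟩
  have htsurj : ∀ x ∈ E, ∃ w ∈ W, tau w = x := by
    intro x hx
    obtain ⟨htI, hxi⟩ := xiMap_mem hx
    obtain ⟨t, htt, hts⟩ := hbij.surjOn htI
    obtain ⟨w, hw, -, htau⟩ := hconstr t htt
    exact ⟨w, hw, by rw [htau, hts, hxi]⟩
  refine ⟨W, ⟨?_, ⟨?_, ?_⟩, ?_, ?_⟩, ?_⟩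
  · -- measurability
    apply MeasurableSet.iUnion
    intro k
    have h2k : (0:ℝ) < (2:ℝ)^k := zpow_pos (by norm_num) k
    have hc : ((2:ℝ)^k * (2*π)) ≠ 0 := by positivity
    apply MeasurableSet.union
    · have himg : (fun t => (2:ℝ)^k * (2*π) * t) '' A k
          = (fun y => y / ((2:ℝ)^k * (2*π))) ⁻¹' A k := by
        ext y
        simp only [mem_image, mem_preimage]
        constructor
        · rintro ⟨t, ht, rfl⟩; rwa [mul_div_cancel_left₀ _ hc]
        · intro hy; exact ⟨y / ((2:ℝ)^k * (2*π)), hy, by field_simp⟩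
      rw [himg]
      exact (hAm k).preimage (measurable_id.div_const _)
    · have himg : (fun t => (2:ℝ)^k * (2*π) * (t-1)) '' B k
          = (fun y => y / ((2:ℝ)^k * (2*π)) + 1) ⁻¹' B k := by
        ext y
        simp only [mem_image, mem_preimage]
        constructor
        · rintro ⟨t, ht, rfl⟩
          have : (2:ℝ)^k * (2*π) * (t-1) / ((2:ℝ)^k * (2*π)) + 1 = t := by field_simp; ring
          rwa [this]
        · intro hy
          exact ⟨y / ((2:ℝ)^k * (2*π)) + 1, hy, by field_simp; ring⟩
      rw [himg]
      exact (hBm k).preimage ((measurable_id.div_const _).add_const 1)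
  · -- translation cover
    rw [eq_univ_iff_forall]
    intro y
    obtain ⟨w, hw, htw⟩ := htsurj (tau y) (tau_mem_E y)
    obtain ⟨my, hmy⟩ := tau_add_int y
    obtain ⟨mw, hmw⟩ := tau_add_int w
    refine mem_iUnion.2 ⟨my - mw, ⟨w, hw, ?_⟩⟩
    push_cast
    linear_combination hmw - hmy + htw
  · -- translation disjoint
    intro k l hkl
    rw [Set.disjoint_left]
    rintro y ⟨w1, hw1, rfl⟩ ⟨w2, hw2, heq⟩
    simp only at heq
    have htw : tau w1 = tau w2 := by
      rw [← tau_periodic w1 k, ← tau_periodic w2 l, heq]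
    have hw12 : w1 = w2 := htinj w1 hw1 w2 hw2 htw
    rw [hw12] at heq
    have hcan : 2*π*(l:ℝ) = 2*π*(k:ℝ) := by linarith [heq]
    have : (l:ℝ) = (k:ℝ) := mul_left_cancel₀ twoPiPos.ne' hcan
    exact hkl (by exact_mod_cast this.symm)
  · -- dilation cover
    ext y
    simp only [mem_iUnion, mem_image, mem_compl_iff, mem_singleton_iff]
    constructor
    · rintro ⟨k, w, hw, rfl⟩
      obtain ⟨k', t, hb⟩ := hWmem w hw
      obtain ⟨-, -, -, hw0⟩ := hkey _ _ _ hb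
      exact mul_ne_zero (zpow_ne_zero k two_ne_zero) hw0
    · intro hy
      obtain ⟨w, hw, hdw⟩ := hdsurj (delta y) (delta_mem_E hy)
      refine ⟨kE w - kE y, w, hw, ?_⟩
      have hkey2 : (2:ℝ)^(kE w) * w = (2:ℝ)^(kE y) * y := by
        rw [← delta_def, ← delta_def, hdw]
      have h2y : ((2:ℝ)^(kE y)) ≠ 0 := zpow_ne_zero _ two_ne_zero
      calc (2:ℝ)^(kE w - kE y) * w
          = ((2:ℝ)^(kE y))⁻¹ * ((2:ℝ)^(kE w) * w) := by
            rw [zpow_sub₀ two_ne_zero]; ring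
        _ = ((2:ℝ)^(kE y))⁻¹ * ((2:ℝ)^(kE y) * y) := by rw [hkey2]
        _ = y := by field_simp
  · -- dilation disjoint
    intro k l hkl
    rw [Set.disjoint_left]
    rintro y ⟨w1, hw1, rfl⟩ ⟨w2, hw2, heq⟩
    simp only at heq
    obtain ⟨k1, t1, hb1⟩ := hWmem w1 hw1
    obtain ⟨k2, t2, hb2⟩ := hWmem w2 hw2
    obtain ⟨-, -, -, h10⟩ := hkey _ _ _ hb1
    obtain ⟨-, -, -, h20⟩ := hkey _ _ _ hb2
    have hde : delta w1 = delta w2 := by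
      rw [← delta_zpow h10 k, ← delta_zpow h20 l, heq]
    have hw12 : w1 = w2 := hdinj w1 hw1 w2 hw2 hde
    rw [hw12] at heq
    have h2kl : (2:ℝ)^l = (2:ℝ)^k := mul_right_cancel₀ h20 heq
    exact hkl (zpow_right_injective₀ (by norm_num : (0:ℝ) < 2) (by norm_num) h2kl).symm
  · -- EqOn
    intro t ht
    obtain ⟨w, hw, hdw, htw⟩ := hconstr t ht
    have hex : ∃ a ∈ W, delta a = xiInv t := ⟨w, hw, hdw⟩
    have h1 : Function.invFunOn delta W (xiInv t) ∈ W := Function.invFunOn_mem hex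
    have h2 : delta (Function.invFunOn delta W (xiInv t)) = xiInv t := Function.invFunOn_eq hex
    have hww' : Function.invFunOn delta W (xiInv t) = w :=
      hdinj _ h1 w hw (by rw [h2, hdw])
    show h t = hIso W t
    rw [hIso]
    rw [hww', htw, xiMap_xiInv (hbij.mapsTo ht)]

end
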